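/- If the GF dimension of a countable collection C of infinite languages over U is finite, then C can be uniformly generated with feedback. -/
import Mathlib


/-! STATEMENT 14: If the GF dimension of a countable collection C of infinite languages over U is finite, then C can be uniformly generated with feedback. -/

/-- A generator strategy in the feedback model: `query h x` is the membership query
`y_t` issued after receiving input `x_t` with history `h` of completed rounds, and
`out h x y a` is the output `z_t` after the answer `a_t` to the query. -/
structure FGen (U : Type) where
  query : List (U × U × Bool × U) → U → U
  out : List (U × U × Bool × U) → U → U → Bool → U

/-- An adversary strategy in the feedback model: `inp h` is the next input `x_t`,
and `ans h x y` is the yes/no answer `a_t` to the generator's query `y_t`. -/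
structure FAdv (U : Type) where
  inp : List (U × U × Bool × U) → U
  ans : List (U × U × Bool × U) → U → U → Bool

/-- The history of the first `t` completed rounds `(x_s, y_s, a_s, z_s)` of the
interaction between `Adv` and `Gen`. -/
def fRun {U : Type} (Adv : FAdv U) (Gen : FGen U) : ℕ → List (U × U × Bool × U)
  | 0 => []
  | t + 1 =>
      let h := fRun Adv Gen t
      let x := Adv.inp h
      let y := Gen.query h x
      let a := Adv.ans h x y
      h ++ [(x, y, a, Gen.out h x y a)]

/-- The input `x_t` of round `t` (0-indexed) of the transcript T(Adv, Gen). -/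
def fX {U : Type} (Adv : FAdv U) (Gen : FGen U) (t : ℕ) : U :=
  Adv.inp (fRun Adv Gen t)

/-- The generator's query `y_t` of round `t`. -/
def fY {U : Type} (Adv : FAdv U) (Gen : FGen U) (t : ℕ) : U :=
  Gen.query (fRun Adv Gen t) (fX Adv Gen t)

/-- The adversary's answer `a_t` of round `t`. -/
def fA {U : Type} (Adv : FAdv U) (Gen : FGen U) (t : ℕ) : Bool :=
  Adv.ans (fRun Adv Gen t) (fX Adv Gen t) (fY Adv Gen t)

/-- The generator's output `z_t` of round `t`. -/
def fZ {U : Type} (Adv : FAdv U) (Gen : FGen U) (t : ℕ) : U :=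
  Gen.out (fRun Adv Gen t) (fX Adv Gen t) (fY Adv Gen t) (fA Adv Gen t)

/-- `S_r`: the set of distinct inputs among the first `r` rounds. -/
def fS {U : Type} (Adv : FAdv U) (Gen : FGen U) (r : ℕ) : Set U :=
  fX Adv Gen '' {t | t < r}

/-- The adversary strategy `Adv` is consistent with the language `K` (against `Gen`):
the inputs form an enumeration of `K` and every answer is truthful for `K`. -/
def fConsistent {U : Type} (Adv : FAdv U) (Gen : FGen U) (K : Set U) : Prop :=
  (∀ t, fX Adv Gen t ∈ K) ∧ (∀ w ∈ K, ∃ t, fX Adv Gen t = w) ∧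
    ∀ t, fA Adv Gen t = true ↔ fY Adv Gen t ∈ K

/-- `C_r(T)`: the languages of `C` consistent with the transcript up to round `r`
(inputs belong to the language and all answers are truthful for it). -/
def fCons {U : Type} (C : Set (Set U)) (Adv : FAdv U) (Gen : FGen U) (r : ℕ) :
    Set (Set U) :=
  {Lang ∈ C | ∀ t < r, fX Adv Gen t ∈ Lang ∧ (fA Adv Gen t = true ↔ fY Adv Gen t ∈ Lang)}

/-- The effective intersection `E_r(T)`. -/
def fE {U : Type} (C : Set (Set U)) (Adv : FAdv U) (Gen : FGen U) (r : ℕ) : Set U :=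
  ⋂₀ fCons C Adv Gen r \ fS Adv Gen r

/-- The GF dimension of `C`: the supremum of all `d ∈ ℕ` such that for every
generator strategy there are `K ∈ C` and an adversary strategy consistent with `K`
whose transcript has a finite round `r ≥ d` with `|S_r| ≥ d` and `E_r(T) = ∅`. -/
noncomputable def gfDim {U : Type} (C : Set (Set U)) : ℕ∞ :=
  sSup {e : ℕ∞ | ∃ d : ℕ, e = (d : ℕ∞) ∧
    ∀ Gen : FGen U, ∃ K ∈ C, ∃ Adv : FAdv U,
      fConsistent Adv Gen K ∧
      ∃ r : ℕ, d ≤ r ∧ d ≤ (fS Adv Gen r).ncard ∧ fE C Adv Gen r = ∅}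

/-- `C` can be uniformly generated with feedback: some generator strategy `Gen` and
bound `t*` are such that against every adversary consistent with any `K ∈ C`, the
output of every round `t` with `|S_t| ≥ t*` lies in `K \ S_t` (here `S_t` counts the
inputs up to and including round `t`). -/
def UniformGenWithFeedback {U : Type} (C : Set (Set U)) : Prop :=
  ∃ Gen : FGen U, ∃ tstar : ℕ,
    ∀ K ∈ C, ∀ Adv : FAdv U, fConsistent Adv Gen K →
      ∀ t : ℕ, tstar ≤ (fS Adv Gen (t + 1)).ncard →
        fZ Adv Gen t ∈ K \ fS Adv Gen (t + 1)

/-! ### Auxiliary machinery for the proof -/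

/-- Languages of `C` consistent with a raw history list (ignoring output components). -/
def consSet {U : Type} (C : Set (Set U)) (h : List (U × U × Bool × U)) : Set (Set U) :=
  {L ∈ C | ∀ e ∈ h, e.1 ∈ L ∧ (e.2.2.1 = true ↔ e.2.1 ∈ L)}

/-- The effective intersection computed from a raw history list. -/
def eSet {U : Type} (C : Set (Set U)) (h : List (U × U × Bool × U)) : Set U :=
  ⋂₀ consSet C h \ {u | ∃ e ∈ h, e.1 = u}

/-- Recompute the outputs of a history using the generator `G`. -/
def reout {U : Type} (G : FGen U) (h : List (U × U × Bool × U)) : List (U × U × Bool × U) :=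
  h.foldl (fun acc e => acc ++ [(e.1, e.2.1, e.2.2.1, G.out acc e.1 e.2.1 e.2.2.1)]) []

lemma reout_append {U : Type} (G : FGen U) (h : List (U × U × Bool × U))
    (e : U × U × Bool × U) :
    reout G (h ++ [e]) =
      reout G h ++ [(e.1, e.2.1, e.2.2.1, G.out (reout G h) e.1 e.2.1 e.2.2.1)] := by
  simp [reout, List.foldl_append]

/-- The generator we construct from a generator `G0` witnessing finite GF dimension. -/
noncomputable def mkGen {U : Type} [Nonempty U] (C : Set (Set U)) (G0 : FGen U) : FGen U where
  query h x := G0.query (reout G0 h) x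
  out h x y a :=
    letI := Classical.propDecidable
    if hne : (eSet C (h ++ [(x, y, a, Classical.arbitrary U)])).Nonempty then hne.some
    else Classical.arbitrary U

lemma enat_eq_top_of_forall_le (x : ℕ∞) (hx : ∀ n : ℕ, (n : ℕ∞) ≤ x) : x = ⊤ := by
  cases x with
  | top => rfl
  | coe n =>
    have := Nat.cast_le.mp (hx (n + 1))
    omega

/-- Transfer an adversary playing against `G` to one playing against the simulated generator. -/
def transAdv {U : Type} (Adv : FAdv U) (G : FGen U) : FAdv U where
  inp h := Adv.inp (reout G h)
  ans h x y := Adv.ans (reout G h) x y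

lemma fRun_succ {U : Type} (Adv : FAdv U) (Gen : FGen U) (t : ℕ) :
    fRun Adv Gen (t + 1) =
      fRun Adv Gen t ++ [(fX Adv Gen t, fY Adv Gen t, fA Adv Gen t, fZ Adv Gen t)] := rfl

/-- The simulation lemma: the run of the transferred adversary against `G0` has the same
input/query/answer components as the run of `Adv` against `mkGen C G0`. -/
lemma sim_run {U : Type} [Nonempty U] (C : Set (Set U)) (G0 : FGen U) (Adv : FAdv U) :
    ∀ t : ℕ,
      fRun (transAdv Adv (mkGen C G0)) G0 t = reout G0 (fRun Adv (mkGen C G0) t) ∧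
      fRun Adv (mkGen C G0) t = reout (mkGen C G0) (fRun (transAdv Adv (mkGen C G0)) G0 t) := by
  intro t
  induction t with
  | zero => constructor <;> rfl
  | succ t ih =>
    set Gen := mkGen C G0 with hGen
    set Adv' := transAdv Adv Gen with hAdv'
    obtain ⟨ih1, ih2⟩ := ih
    have hx : fX Adv' G0 t = fX Adv Gen t := by
      show Adv'.inp (fRun Adv' G0 t) = Adv.inp (fRun Adv Gen t)
      rw [hAdv']; show Adv.inp (reout Gen (fRun Adv' G0 t)) = _
      rw [← ih2]
    have hy : fY Adv' G0 t = fY Adv Gen t := by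
      show G0.query (fRun Adv' G0 t) (fX Adv' G0 t) = Gen.query (fRun Adv Gen t) (fX Adv Gen t)
      rw [hx, hGen]; show _ = G0.query (reout G0 (fRun Adv Gen t)) (fX Adv Gen t)
      rw [← ih1]
    have ha : fA Adv' G0 t = fA Adv Gen t := by
      show Adv'.ans (fRun Adv' G0 t) (fX Adv' G0 t) (fY Adv' G0 t) = _
      rw [hAdv']
      show Adv.ans (reout Gen (fRun Adv' G0 t)) (fX Adv' G0 t) (fY Adv' G0 t) = _
      rw [← ih2, hx, hy]; rfl
    have hz' : fZ Adv' G0 t = G0.out (fRun Adv' G0 t) (fX Adv Gen t) (fY Adv Gen t)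
        (fA Adv Gen t) := by rw [← hx, ← hy, ← ha]; rfl
    have hz : fZ Adv Gen t = Gen.out (fRun Adv Gen t) (fX Adv Gen t) (fY Adv Gen t)
        (fA Adv Gen t) := rfl
    constructor
    · rw [fRun_succ, fRun_succ, reout_append, ← ih1, hx, hy, ha, hz']
    · rw [fRun_succ, fRun_succ, reout_append, ← ih2, hx, hy, ha, hz]

lemma sim_X {U : Type} [Nonempty U] (C : Set (Set U)) (G0 : FGen U) (Adv : FAdv U) (t : ℕ) :
    fX (transAdv Adv (mkGen C G0)) G0 t = fX Adv (mkGen C G0) t := by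
  show (transAdv Adv (mkGen C G0)).inp (fRun (transAdv Adv (mkGen C G0)) G0 t) = _
  show Adv.inp (reout (mkGen C G0) (fRun (transAdv Adv (mkGen C G0)) G0 t)) = _
  rw [← (sim_run C G0 Adv t).2]; rfl

lemma sim_Y {U : Type} [Nonempty U] (C : Set (Set U)) (G0 : FGen U) (Adv : FAdv U) (t : ℕ) :
    fY (transAdv Adv (mkGen C G0)) G0 t = fY Adv (mkGen C G0) t := by
  show G0.query (fRun (transAdv Adv (mkGen C G0)) G0 t) (fX (transAdv Adv (mkGen C G0)) G0 t)
    = (mkGen C G0).query (fRun Adv (mkGen C G0) t) (fX Adv (mkGen C G0) t)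
  rw [sim_X, (sim_run C G0 Adv t).1]; rfl

lemma sim_A {U : Type} [Nonempty U] (C : Set (Set U)) (G0 : FGen U) (Adv : FAdv U) (t : ℕ) :
    fA (transAdv Adv (mkGen C G0)) G0 t = fA Adv (mkGen C G0) t := by
  show (transAdv Adv (mkGen C G0)).ans (fRun (transAdv Adv (mkGen C G0)) G0 t)
      (fX (transAdv Adv (mkGen C G0)) G0 t) (fY (transAdv Adv (mkGen C G0)) G0 t) = _
  show Adv.ans (reout (mkGen C G0) (fRun (transAdv Adv (mkGen C G0)) G0 t)) _ _ = _
  rw [← (sim_run C G0 Adv t).2, sim_X, sim_Y]; rfl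

lemma fRun_eq_map {U : Type} (Adv : FAdv U) (Gen : FGen U) (t : ℕ) :
    fRun Adv Gen t =
      (List.range t).map (fun s => (fX Adv Gen s, fY Adv Gen s, fA Adv Gen s, fZ Adv Gen s)) := by
  induction t with
  | zero => rfl
  | succ t ih => rw [fRun_succ, List.range_succ, List.map_append, ih]; rfl

lemma fCons_eq_consSet {U : Type} (C : Set (Set U)) (Adv : FAdv U) (Gen : FGen U) (r : ℕ) :
    fCons C Adv Gen r = consSet C (fRun Adv Gen r) := by
  ext L
  simp only [fCons, consSet, Set.mem_setOf_eq, fRun_eq_map, List.mem_map, List.mem_range]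
  constructor
  · rintro ⟨hL, hall⟩
    exact ⟨hL, by rintro e ⟨s, hs, rfl⟩; exact hall s hs⟩
  · rintro ⟨hL, hall⟩
    exact ⟨hL, fun s hs => hall _ ⟨s, hs, rfl⟩⟩

lemma fS_eq {U : Type} (Adv : FAdv U) (Gen : FGen U) (r : ℕ) :
    fS Adv Gen r = {u | ∃ e ∈ fRun Adv Gen r, e.1 = u} := by
  ext u
  simp only [fS, Set.mem_image, Set.mem_setOf_eq, fRun_eq_map, List.mem_map, List.mem_range]
  constructor
  · rintro ⟨s, hs, rfl⟩; exact ⟨_, ⟨s, hs, rfl⟩, rfl⟩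
  · rintro ⟨e, ⟨s, hs, rfl⟩, rfl⟩; exact ⟨s, hs, rfl⟩

lemma fE_eq_eSet {U : Type} (C : Set (Set U)) (Adv : FAdv U) (Gen : FGen U) (r : ℕ) :
    fE C Adv Gen r = eSet C (fRun Adv Gen r) := by
  rw [fE, eSet, fCons_eq_consSet, fS_eq]

lemma eSet_ignores_out {U : Type} (C : Set (Set U)) (h : List (U × U × Bool × U))
    (x y : U) (a : Bool) (z w : U) :
    eSet C (h ++ [(x, y, a, z)]) = eSet C (h ++ [(x, y, a, w)]) := by
  have hc : consSet C (h ++ [(x, y, a, z)]) = consSet C (h ++ [(x, y, a, w)]) := by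
    ext L
    simp only [consSet, Set.mem_setOf_eq, List.forall_mem_append, List.forall_mem_singleton]
  have hs : {u | ∃ e ∈ h ++ [(x, y, a, z)], e.1 = u}
      = {u | ∃ e ∈ h ++ [(x, y, a, w)], e.1 = u} := by
    ext u
    simp only [Set.mem_setOf_eq, List.mem_append, List.mem_singleton]
    constructor
    · rintro ⟨e, he | rfl, rfl⟩
      · exact ⟨e, Or.inl he, rfl⟩
      · exact ⟨(x, y, a, w), Or.inr rfl, rfl⟩
    · rintro ⟨e, he | rfl, rfl⟩
      · exact ⟨e, Or.inl he, rfl⟩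
      · exact ⟨(x, y, a, z), Or.inr rfl, rfl⟩
  rw [eSet, eSet, hc, hs]

lemma fS_ncard_le {U : Type} (Adv : FAdv U) (Gen : FGen U) (r : ℕ) :
    (fS Adv Gen r).ncard ≤ r := by
  have h1 : {t : ℕ | t < r} = Set.Iio r := rfl
  calc (fS Adv Gen r).ncard ≤ ({t : ℕ | t < r}).ncard :=
        Set.ncard_image_le (by rw [h1]; exact Set.finite_Iio r)
    _ = r := by rw [h1]; simp [Set.ncard_eq_toFinset_card']

theorem gfDim_finite_implies_uniform_generation_with_feedback
    (U : Type) [Countable U] [Infinite U]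
    (C : Set (Set U)) (hC : C.Countable) (hInf : ∀ L ∈ C, L.Infinite)
    (h : gfDim C ≠ ⊤) :
    UniformGenWithFeedback C := by
  classical
  have hNe : Nonempty U := inferInstance
  -- Extract some d with the dimension property failing at d.
  have hd : ∃ d : ℕ, ¬ (∀ Gen : FGen U, ∃ K ∈ C, ∃ Adv : FAdv U,
      fConsistent Adv Gen K ∧
      ∃ r : ℕ, d ≤ r ∧ d ≤ (fS Adv Gen r).ncard ∧ fE C Adv Gen r = ∅) := by
    by_contra hall
    push_neg at hall
    apply h
    rw [gfDim]
    have htop : ∀ n : ℕ, (n : ℕ∞) ≤ sSup {e : ℕ∞ | ∃ d : ℕ, e = (d : ℕ∞) ∧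
        ∀ Gen : FGen U, ∃ K ∈ C, ∃ Adv : FAdv U,
          fConsistent Adv Gen K ∧
          ∃ r : ℕ, d ≤ r ∧ d ≤ (fS Adv Gen r).ncard ∧ fE C Adv Gen r = ∅} := by
      intro n
      exact le_sSup ⟨n, rfl, hall n⟩
    exact enat_eq_top_of_forall_le _ htop
  obtain ⟨d0, hd0⟩ := hd
  push_neg at hd0
  obtain ⟨G0, hG0⟩ := hd0
  refine ⟨mkGen C G0, d0, ?_⟩
  intro K hK Adv hcons t hcard
  set Gen := mkGen C G0 with hGenDef
  set Adv' := transAdv Adv Gen with hAdv'Def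
  -- transfer consistency
  have hcons' : fConsistent Adv' G0 K := by
    obtain ⟨h1, h2, h3⟩ := hcons
    refine ⟨fun s => by rw [sim_X]; exact h1 s,
      fun w hw => ?_, fun s => by rw [sim_A, sim_Y]; exact h3 s⟩
    obtain ⟨s, hs⟩ := h2 w hw
    exact ⟨s, by rw [sim_X]; exact hs⟩
  -- same consistent sets and effective intersections
  have hSeq : ∀ r, fS Adv' G0 r = fS Adv Gen r := by
    intro r; unfold fS; ext u
    simp only [Set.mem_image]
    constructor
    · rintro ⟨s, hs, rfl⟩; exact ⟨s, hs, (sim_X C G0 Adv s).symm⟩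
    · rintro ⟨s, hs, rfl⟩; exact ⟨s, hs, sim_X C G0 Adv s⟩
  have hConsEq : ∀ r, fCons C Adv' G0 r = fCons C Adv Gen r := by
    intro r; unfold fCons; ext L
    simp only [Set.mem_setOf_eq]
    constructor
    · rintro ⟨hL, hall⟩
      refine ⟨hL, fun s hs => ?_⟩
      have := hall s hs
      rwa [sim_X, sim_A, sim_Y] at this
    · rintro ⟨hL, hall⟩
      refine ⟨hL, fun s hs => ?_⟩
      rw [sim_X, sim_A, sim_Y]
      exact hall s hs
  have hEeq : ∀ r, fE C Adv' G0 r = fE C Adv Gen r := by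
    intro r; unfold fE; rw [hConsEq, hSeq]
  -- the effective intersection at round t+1 is nonempty
  have hr1 : d0 ≤ t + 1 := le_trans hcard (fS_ncard_le Adv Gen (t + 1))
  have hEne : (fE C Adv Gen (t + 1)).Nonempty := by
    have := hG0 K hK Adv' hcons' (t + 1) hr1 (by rw [hSeq]; exact hcard)
    rwa [hEeq] at this
  -- the output is the chosen element of the effective intersection
  have hEform : fE C Adv Gen (t + 1)
      = eSet C (fRun Adv Gen t ++ [(fX Adv Gen t, fY Adv Gen t, fA Adv Gen t,
          Classical.arbitrary U)]) := by
    rw [fE_eq_eSet, fRun_succ, eSet_ignores_out]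
  have hEne' : (eSet C (fRun Adv Gen t ++ [(fX Adv Gen t, fY Adv Gen t, fA Adv Gen t,
      Classical.arbitrary U)])).Nonempty := by rwa [hEform] at hEne
  have hz : fZ Adv Gen t ∈ fE C Adv Gen (t + 1) := by
    have heq : fZ Adv Gen t = (mkGen C G0).out (fRun Adv Gen t) (fX Adv Gen t) (fY Adv Gen t)
        (fA Adv Gen t) := rfl
    rw [heq, hEform]
    unfold mkGen
    simp only
    rw [dif_pos hEne']
    exact hEne'.some_mem
  -- conclude: fE ⊆ K \ S
  have hKmem : K ∈ fCons C Adv Gen (t + 1) := by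
    refine ⟨hK, fun s _ => ⟨hcons.1 s, hcons.2.2 s⟩⟩
  exact ⟨hz.1 K hKmem, hz.2⟩
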